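/- In the 1-2 chip-firing game starting with n > 3 chips, the left part of the final state is obtained by writing n in binary, removing the leading digit, and increasing every remaining digit by 1 (so digits 0,1 become 1,2); i.e., if n = 2^k + Σ_{i=0}^{k−1} b_i 2^i with b_i ∈ {0,1}, then the final state has b_i + 1 chips at vertex −i for 0 ≤ i ≤ k−1. -/

import Mathlib

/-- Firing at vertex `i` in the `a`-`b` chip-firing game on `ℤ`:
requires at least `a+b` chips at `i`, sends `a` chips to `i-1` and `b` chips to `i+1`. -/
def fireAt (a b : ℕ) (i : ℤ) (σ σ' : ℤ →₀ ℕ) : Prop :=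
  a + b ≤ σ i ∧
  σ' (i - 1) = σ (i - 1) + a ∧
  σ' i = σ i - (a + b) ∧
  σ' (i + 1) = σ (i + 1) + b ∧
  ∀ m : ℤ, m ≠ i - 1 → m ≠ i → m ≠ i + 1 → σ' m = σ m

/-- Reachability by a finite sequence of firings. -/
def Reaches (a b : ℕ) : (ℤ →₀ ℕ) → (ℤ →₀ ℕ) → Prop :=
  Relation.ReflTransGen (fun σ σ' => ∃ i, fireAt a b i σ σ')

/-- Initial state: `n` chips at the origin. -/
noncomputable def initState (n : ℕ) : ℤ →₀ ℕ := Finsupp.single 0 n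

/-- `Leads a b σ L σ'`: the list `L` of vertices, fired in order (each legal),
leads from state `σ` to state `σ'`. -/
inductive Leads (a b : ℕ) : (ℤ →₀ ℕ) → List ℤ → (ℤ →₀ ℕ) → Prop
  | nil (σ : ℤ →₀ ℕ) : Leads a b σ [] σ
  | cons {σ τ σ' : ℤ →₀ ℕ} {i : ℤ} {L : List ℤ} :
      fireAt a b i σ τ → Leads a b τ L σ' → Leads a b σ (i :: L) σ'

/-- The state polynomial `S_σ(t) = Σ_m s_m t^{-m}` evaluated at `t`. -/
noncomputable def statePoly (σ : ℤ →₀ ℕ) (t : ℚ) : ℚ :=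
  ∑ m ∈ σ.support, (σ m : ℚ) * t ^ (-m)

/-- The left part `S_{σ^L}(t) = Σ_{m ≤ 0} s_m t^{-m}`. -/
noncomputable def statePolyL (σ : ℤ →₀ ℕ) (t : ℚ) : ℚ :=
  ∑ m ∈ σ.support.filter (fun m => m ≤ 0), (σ m : ℚ) * t ^ (-m)

/-- The right part `S_{σ^R}(t) = Σ_{m ≥ 1} s_m t^{-m}`. -/
noncomputable def statePolyR (σ : ℤ →₀ ℕ) (t : ℚ) : ℚ :=
  ∑ m ∈ σ.support.filter (fun m => 1 ≤ m), (σ m : ℚ) * t ^ (-m)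

/-- `M_σ = Σ_m m·s_m`. -/
def Mval (σ : ℤ →₀ ℕ) : ℤ := ∑ m ∈ σ.support, m * (σ m : ℤ)

/-- A final (stable) state of the game started with `n` chips at the origin. -/
def IsFinalState (a b n : ℕ) (σ : ℤ →₀ ℕ) : Prop :=
  Reaches a b (initState n) σ ∧ ∀ i : ℤ, σ i < a + b

/-- Firing at vertex `i ≥ 1` on the right part: chips sent to vertex `0` are discarded. -/
def rfireAt (a b : ℕ) (i : ℤ) (σ σ' : ℤ →₀ ℕ) : Prop :=
  1 ≤ i ∧ a + b ≤ σ i ∧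
  (∀ m : ℤ, m ≤ 0 → σ' m = 0) ∧
  σ' i = σ i - (a + b) ∧
  σ' (i + 1) = σ (i + 1) + b ∧
  (1 ≤ i - 1 → σ' (i - 1) = σ (i - 1) + a) ∧
  ∀ m : ℤ, 1 ≤ m → m ≠ i - 1 → m ≠ i → m ≠ i + 1 → σ' m = σ m

/-- `Settles a b σ τ`: `τ` is a stable configuration obtained from `σ`
by firings among the vertices `≥ 1`. -/
def Settles (a b : ℕ) (σ τ : ℤ →₀ ℕ) : Prop :=
  Relation.ReflTransGen (fun x y => ∃ i, rfireAt a b i x y) σ τ ∧ ∀ i : ℤ, τ i < a + b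

/-- The settlement sequence: `ξ 0` is empty and `ξ (k+1)` is obtained from `ξ k`
by adding `b` chips at vertex `1` and stabilizing within the vertices `≥ 1`. -/
def SettlementSeq (a b : ℕ) (ξ : ℕ → ℤ →₀ ℕ) : Prop :=
  ξ 0 = 0 ∧ ∀ k : ℕ, Settles a b (ξ k + Finsupp.single 1 b) (ξ (k + 1))

/-- `RLeads a b σ L σ'`: the list `L` of vertices fired in order (right-part firings)
leads from `σ` to `σ'`. -/
inductive RLeads (a b : ℕ) : (ℤ →₀ ℕ) → List ℤ → (ℤ →₀ ℕ) → Prop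
  | nil (σ : ℤ →₀ ℕ) : RLeads a b σ [] σ
  | cons {σ τ σ' : ℤ →₀ ℕ} {i : ℤ} {L : List ℤ} :
      rfireAt a b i σ τ → RLeads a b τ L σ' → RLeads a b σ (i :: L) σ'

/-- The `m`-th tetrahedral number. -/
def Te (m : ℕ) : ℕ := m * (m + 1) * (m + 2) / 6

namespace Aux19

/-! ### Generic finite-interval sum helpers over ℤ -/

lemma zsum_top (a b : ℤ) (h : a ≤ b + 1) (f : ℤ → ℤ) :
    ∑ j ∈ Finset.Icc a (b+1), f j = (∑ j ∈ Finset.Icc a b, f j) + f (b+1) := by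
  have hins : Finset.Icc a (b+1) = insert (b+1) (Finset.Icc a b) := by
    ext x
    simp only [Finset.mem_Icc, Finset.mem_insert]
    omega
  rw [hins, Finset.sum_insert (by simp only [Finset.mem_Icc]; omega)]
  ring

lemma zsum_split (a b c : ℤ) (h1 : a ≤ b + 1) (h2 : b ≤ c) (f : ℤ → ℤ) :
    ∑ j ∈ Finset.Icc a c, f j
      = (∑ j ∈ Finset.Icc a b, f j) + ∑ j ∈ Finset.Icc (b+1) c, f j := by
  have hun : Finset.Icc a c = Finset.Icc a b ∪ Finset.Icc (b+1) c := by
    ext x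
    simp only [Finset.mem_Icc, Finset.mem_union]
    omega
  rw [hun, Finset.sum_union]
  rw [Finset.disjoint_left]
  intro x hx hx'
  simp only [Finset.mem_Icc] at hx hx'
  omega

lemma geo2 (N : ℕ) :
    ∑ t ∈ Finset.Icc (1:ℤ) (N:ℤ), (2:ℤ)^(((N:ℤ)+1-t).toNat) = 2^(N+1) - 2 := by
  induction N with
  | zero => simp
  | succ N ih =>
      have hcast : ((N+1:ℕ):ℤ) = (N:ℤ) + 1 := by push_cast; ring
      rw [hcast, zsum_top 1 (N:ℤ) (by omega)]
      have hcongr : ∀ t ∈ Finset.Icc (1:ℤ) (N:ℤ),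
          (2:ℤ)^(((N:ℤ)+1+1-t).toNat) = 2 * 2^(((N:ℤ)+1-t).toNat) := by
        intro t ht
        simp only [Finset.mem_Icc] at ht
        rw [show ((N:ℤ)+1+1-t).toNat = ((N:ℤ)+1-t).toNat + 1 by omega, pow_succ]
        ring
      rw [Finset.sum_congr rfl hcongr, ← Finset.mul_sum, ih]
      rw [show ((N:ℤ)+1+1-((N:ℤ)+1)).toNat = 1 by omega]
      push_cast
      ring

/-! ### ℕ digit lemmas -/

lemma geoN (K : ℕ) : ∑ i ∈ Finset.range K, 2^i = 2^K - 1 := by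
  induction K with
  | zero => simp
  | succ K ih =>
      rw [Finset.sum_range_succ, ih]
      have : 1 ≤ 2^K := Nat.one_le_two_pow
      omega

lemma split_sum (M : ℕ) (d : ℕ → ℕ) :
    ∑ i ∈ Finset.range (M+1), d i * 2^i = d 0 + 2 * ∑ i ∈ Finset.range M, d (i+1) * 2^i := by
  rw [Finset.sum_range_succ', pow_zero, mul_one, Finset.mul_sum, add_comm]
  congr 1
  apply Finset.sum_congr rfl
  intro i _
  ring

lemma incr : ∀ (k : ℕ) (e : ℕ → ℕ), (∀ i < k, 1 ≤ e i ∧ e i ≤ 2) →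
    ∃ (k' : ℕ) (f : ℕ → ℕ), (∀ i < k', 1 ≤ f i ∧ f i ≤ 2) ∧
      (∑ i ∈ Finset.range k', f i * 2^i) = (∑ i ∈ Finset.range k, e i * 2^i) + 1 ∧
      (∑ i ∈ Finset.range k', f i) ≤ (∑ i ∈ Finset.range k, e i) + 1 := by
  intro k
  induction k with
  | zero =>
      intro e _
      exact ⟨1, fun _ => 1, by intro i hi; exact ⟨le_rfl, one_le_two⟩, by simp, by simp⟩
  | succ k ih =>
      intro e he
      rcases eq_or_ne (e 0) 1 with h0 | h0
      · refine ⟨k+1, fun i => if i = 0 then 2 else e i, ?_, ?_, ?_⟩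
        · intro i hi
          rcases eq_or_ne i 0 with rfl | hne
          · simp
          · simp only [if_neg hne]; exact he i hi
        · rw [split_sum, split_sum]
          simp [h0]
          try omega
        · rw [Finset.sum_range_succ', Finset.sum_range_succ' _ k]
          simp [h0]
          try omega
      · have h0' : e 0 = 2 := by have := he 0 (by omega); omega
        obtain ⟨k'', g, hg, hgv, hgs⟩ := ih (fun i => e (i+1))
          (fun i hi => he (i+1) (by omega))
        refine ⟨k''+1, fun i => if i = 0 then 1 else g (i-1), ?_, ?_, ?_⟩
        · intro i hi
          rcases eq_or_ne i 0 with rfl | hne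
          · simp
          · simp only [if_neg hne]
            obtain ⟨j, rfl⟩ := Nat.exists_eq_succ_of_ne_zero hne
            simpa using hg j (by omega)
        · rw [split_sum, split_sum]
          simp [hgv, h0']
          try omega
        · rw [Finset.sum_range_succ', Finset.sum_range_succ' _ k]
          simp [h0']
          try omega



lemma digitMax : ∀ (X M k : ℕ) (d e : ℕ → ℕ),
    (∀ i, d i ≤ 2) → (∀ i < k, 1 ≤ e i ∧ e i ≤ 2) →
    (∑ i ∈ Finset.range M, d i * 2^i) = X → (∑ i ∈ Finset.range k, e i * 2^i) = X →
    ((∑ i ∈ Finset.range M, d i) ≤ ∑ i ∈ Finset.range k, e i) ∧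
    ((∑ i ∈ Finset.range M, d i) = (∑ i ∈ Finset.range k, e i) →
      ∀ i < M, d i = if i < k then e i else 0) := by
  intro X
  induction X using Nat.strong_induction_on with
  | _ X IH =>
  intro M k d e hd he hdv hev
  rcases Nat.eq_zero_or_pos X with rfl | hX
  · have hk : k = 0 := by
      by_contra hk
      have h1 := he 0 (by omega)
      have h2 : e 0 * 2^0 ≤ ∑ i ∈ Finset.range k, e i * 2^i :=
        Finset.single_le_sum (f := fun i => e i * 2^i) (fun i _ => Nat.zero_le _)
          (Finset.mem_range.mpr (by omega))
      simp only [pow_zero, mul_one] at h2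
      omega
    subst hk
    have hdz : ∀ i < M, d i = 0 := by
      intro i hi
      have h1 : d i * 2^i = 0 :=
        Finset.sum_eq_zero_iff.mp hdv i (Finset.mem_range.mpr hi)
      rcases Nat.mul_eq_zero.mp h1 with h | h
      · exact h
      · exact absurd h (by positivity)
    constructor
    · rw [Finset.sum_eq_zero (fun i hi => hdz i (Finset.mem_range.mp hi))]
      simp
    · intro _ i hi
      simp only [Nat.not_lt_zero, if_false]
      exact hdz i hi
  · -- X ≥ 1
    have hM : M ≠ 0 := by rintro rfl; simp at hdv; omega
    have hk : k ≠ 0 := by rintro rfl; simp at hev; omega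
    obtain ⟨M', rfl⟩ := Nat.exists_eq_succ_of_ne_zero hM
    obtain ⟨k', rfl⟩ := Nat.exists_eq_succ_of_ne_zero hk
    simp only [Nat.succ_eq_add_one] at hdv hev ⊢
    rw [split_sum] at hdv hev
    have hd0 := hd 0
    have he0 := he 0 (by omega)
    set Sd := ∑ i ∈ Finset.range M', d (i+1) * 2^i with hSd
    set Se := ∑ i ∈ Finset.range k', e (i+1) * 2^i with hSe
    have hd' : ∀ i, d (i+1) ≤ 2 := fun i => hd (i+1)
    have he' : ∀ i < k', 1 ≤ e (i+1) ∧ e (i+1) ≤ 2 := fun i hi => he (i+1) (by omega)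
    have hsum_d : ∑ i ∈ Finset.range (M'+1), d i = d 0 + ∑ i ∈ Finset.range M', d (i+1) := by
      rw [Finset.sum_range_succ']; omega
    have hsum_e : ∑ i ∈ Finset.range (k'+1), e i = e 0 + ∑ i ∈ Finset.range k', e (i+1) := by
      rw [Finset.sum_range_succ']; omega
    rcases Nat.even_or_odd X with hpar | hpar
    · -- X even : e 0 = 2, d 0 ∈ {0,2}
      have he02 : e 0 = 2 := by rcases hpar with ⟨y, hy⟩; omega
      rcases (by omega : d 0 = 0 ∨ d 0 = 2) with hd00 | hd02
      · -- d 0 = 0 : strict inequality via incr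
        have hZ : Sd = X / 2 := by omega
        have hZe : Se + 1 = X / 2 := by omega
        obtain ⟨k'', f, hf, hfv, hfs⟩ := incr k' (fun i => e (i+1)) he'
        have hIH := IH (X/2) (by omega) M' k'' (fun i => d (i+1)) f hd' hf
          (by rw [← hSd]; exact hZ) (by rw [hfv, ← hSe]; exact hZe)
        have hlt : ∑ i ∈ Finset.range (M'+1), d i < ∑ i ∈ Finset.range (k'+1), e i := by
          rw [hsum_d, hsum_e, hd00, he02]
          have := hIH.1
          omega
        exact ⟨by omega, by omega⟩
      · -- d 0 = 2
        have hZ : Sd = (X - 2) / 2 := by omega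
        have hZe : Se = (X - 2) / 2 := by omega
        have hIH := IH ((X-2)/2) (by omega) M' k' (fun i => d (i+1)) (fun i => e (i+1))
          hd' he' (by rw [← hSd]; exact hZ) (by rw [← hSe]; exact hZe)
        constructor
        · rw [hsum_d, hsum_e]
          have := hIH.1; omega
        · intro heqs i hi
          have heqs' : ∑ i ∈ Finset.range M', d (i+1) = ∑ i ∈ Finset.range k', e (i+1) := by
            rw [hsum_d, hsum_e] at heqs
            have := hIH.1; omega
          rcases i with _ | j
          · simp only [if_pos (by omega : 0 < k'+1)]; omega
          · have := hIH.2 heqs' j (by omega)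
            rcases Nat.lt_or_ge j k' with hj | hj
            · rw [if_pos hj] at this; rw [if_pos (by omega : j+1 < k'+1)]; exact this
            · rw [if_neg (by omega)] at this; rw [if_neg (by omega : ¬ j+1 < k'+1)]; exact this
    · -- X odd : e 0 = 1, d 0 = 1
      have he01 : e 0 = 1 := by rcases hpar with ⟨y, hy⟩; omega
      have hd01 : d 0 = 1 := by rcases hpar with ⟨y, hy⟩; omega
      have hZ : Sd = (X - 1) / 2 := by omega
      have hZe : Se = (X - 1) / 2 := by omega
      have hIH := IH ((X-1)/2) (by omega) M' k' (fun i => d (i+1)) (fun i => e (i+1))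
        hd' he' (by rw [← hSd]; exact hZ) (by rw [← hSe]; exact hZe)
      constructor
      · rw [hsum_d, hsum_e]
        have := hIH.1; omega
      · intro heqs i hi
        have heqs' : ∑ i ∈ Finset.range M', d (i+1) = ∑ i ∈ Finset.range k', e (i+1) := by
          rw [hsum_d, hsum_e] at heqs
          have := hIH.1; omega
        rcases i with _ | j
        · simp only [if_pos (by omega : 0 < k'+1)]; omega
        · have := hIH.2 heqs' j (by omega)
          rcases Nat.lt_or_ge j k' with hj | hj
          · rw [if_pos hj] at this; rw [if_pos (by omega : j+1 < k'+1)]; exact this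
          · rw [if_neg (by omega)] at this; rw [if_neg (by omega : ¬ j+1 < k'+1)]; exact this


/-! ### Least action principle -/

def Dv (n : ℕ) (v : ℤ →₀ ℕ) (m : ℤ) : ℤ :=
  (if m = 0 then (n : ℤ) else 0) + v (m+1) + 2 * v (m-1) - 3 * v m

/-! ### The explicit stabilizing vector -/

def Ssum (k : ℕ) (bdig : ℕ → ℕ) (j : ℕ) : ℕ := ∑ t ∈ Finset.Ico j k, (bdig t + 1)

def vL (k : ℕ) (bdig : ℕ → ℕ) (j : ℕ) : ℕ :=
  ∑ t ∈ Finset.Ico (j+1) k, (bdig t + 1) * (2^(t-j) - 1)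

lemma Ssum_zero (k : ℕ) (bdig : ℕ → ℕ) (j : ℕ) (h : k ≤ j) : Ssum k bdig j = 0 := by
  unfold Ssum
  rw [Finset.Ico_eq_empty (by omega)]
  simp

lemma Ssum_split (k : ℕ) (bdig : ℕ → ℕ) (j : ℕ) (h : j < k) :
    Ssum k bdig j = (bdig j + 1) + Ssum k bdig (j+1) := by
  unfold Ssum
  rw [Finset.sum_eq_sum_Ico_succ_bot h]

lemma vL_zero (k : ℕ) (bdig : ℕ → ℕ) (j : ℕ) (h : k ≤ j + 1) : vL k bdig j = 0 := by
  unfold vL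
  rw [Finset.Ico_eq_empty (by omega)]
  simp

lemma vL_rec (k : ℕ) (bdig : ℕ → ℕ) (j : ℕ) :
    vL k bdig j = 2 * vL k bdig (j+1) + Ssum k bdig (j+1) := by
  have h1 : ∀ t ∈ Finset.Ico (j+1) k, (bdig t + 1) * (2^(t-j) - 1)
      = 2 * ((bdig t + 1) * (2^(t-j-1) - 1)) + (bdig t + 1) := by
    intro t ht
    simp only [Finset.mem_Ico] at ht
    have h2 : 1 ≤ t - j := by omega
    have h3 : (2:ℤ)^(t-j) = 2 * 2^(t-j-1) := by
      rw [← pow_succ']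
      congr 1
      omega
    have h4 : 1 ≤ (2:ℕ)^(t-j-1) := Nat.one_le_two_pow
    have h5 : 1 ≤ (2:ℕ)^(t-j) := Nat.one_le_two_pow
    zify [h4, h5]
    linear_combination ((bdig t : ℤ) + 1) * h3
  have e2 : vL k bdig (j+1) = ∑ t ∈ Finset.Ico (j+2) k, (bdig t + 1) * (2^(t-j-1) - 1) := by
    unfold vL
    apply Finset.sum_congr (by norm_num)
    intro t ht
    rw [Nat.sub_sub]
  have e3 : ∑ t ∈ Finset.Ico (j+2) k, (bdig t + 1) * (2^(t-j-1) - 1)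
      = ∑ t ∈ Finset.Ico (j+1) k, (bdig t + 1) * (2^(t-j-1) - 1) := by
    apply Finset.sum_subset (Finset.Ico_subset_Ico (Nat.le_succ (j+1)) (le_refl k))
    intro t ht hnt
    simp only [Finset.mem_Ico] at ht hnt
    have h6 : t = j + 1 := by omega
    subst h6
    simp
  calc vL k bdig j
      = ∑ t ∈ Finset.Ico (j+1) k, (2 * ((bdig t + 1) * (2^(t-j-1) - 1)) + (bdig t + 1)) := by
        unfold vL
        exact Finset.sum_congr rfl h1
    _ = 2 * (∑ t ∈ Finset.Ico (j+1) k, (bdig t + 1) * (2^(t-j-1) - 1))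
        + ∑ t ∈ Finset.Ico (j+1) k, (bdig t + 1) := by
        rw [Finset.sum_add_distrib, Finset.mul_sum]
    _ = 2 * vL k bdig (j+1) + Ssum k bdig (j+1) := by
        rw [← e3, ← e2]
        rfl

def fv (k : ℕ) (bdig : ℕ → ℕ) (q : ℕ) : ℤ → ℕ :=
  fun m => if 1 ≤ m then q - 1 - m.toNat else vL k bdig (-m).toNat

lemma fv_supp (k : ℕ) (bdig : ℕ → ℕ) (q : ℕ) :
    ∀ m : ℤ, fv k bdig q m ≠ 0 → m ∈ Finset.Icc (-(k:ℤ)) (q:ℤ) := by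
  intro m hm
  simp only [Finset.mem_Icc]
  unfold fv at hm
  by_cases h1 : (1:ℤ) ≤ m
  · rw [if_pos h1] at hm
    omega
  · rw [if_neg h1] at hm
    have h2 : ¬ (k ≤ (-m).toNat + 1) := fun hc => hm (vL_zero k bdig ((-m).toNat) hc)
    omega

noncomputable def vstar (k : ℕ) (bdig : ℕ → ℕ) (q : ℕ) : ℤ →₀ ℕ :=
  Finsupp.onFinset _ (fv k bdig q) (fv_supp k bdig q)

lemma vstar_apply (k : ℕ) (bdig : ℕ → ℕ) (q : ℕ) (m : ℤ) :
    vstar k bdig q m = fv k bdig q m := rfl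

lemma hv_main (n k q : ℕ) (bdig : ℕ → ℕ) (hbd : ∀ i, bdig i ≤ 1) (hk : 2 ≤ k)
    (hKI : vL k bdig 0 + Ssum k bdig 0 + 1 = n) (hq : q + Ssum k bdig 0 = n)
    (hq2 : 2 ≤ q) :
    ∀ m, 0 ≤ Dv n (vstar k bdig q) m ∧ Dv n (vstar k bdig q) m ≤ 2 := by
  have hvL0 : vL k bdig 0 = q - 1 := by omega
  intro m
  unfold Dv
  rw [vstar_apply, vstar_apply, vstar_apply]
  unfold fv
  rcases (by omega : (2:ℤ) ≤ m ∨ m = 1 ∨ m = 0 ∨ m ≤ -1) with h | h | h | h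
  · rw [if_pos (by omega : (1:ℤ) ≤ m+1), if_pos (by omega : (1:ℤ) ≤ m-1),
      if_pos (by omega : (1:ℤ) ≤ m), if_neg (by omega : ¬ m = 0)]
    omega
  · subst h
    rw [if_pos (by omega : (1:ℤ) ≤ 1+1), if_neg (by omega : ¬ (1:ℤ) ≤ 1-1),
      if_pos (by omega : (1:ℤ) ≤ 1), if_neg (by omega : ¬ (1:ℤ) = 0)]
    rw [show ((-(1-1:ℤ)).toNat) = 0 by omega, hvL0]
    omega
  · subst h
    rw [if_pos (by omega : (1:ℤ) ≤ 0+1), if_neg (by omega : ¬ (1:ℤ) ≤ 0-1),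
      if_neg (by omega : ¬ (1:ℤ) ≤ 0), if_pos rfl]
    rw [show ((-(0-1:ℤ)).toNat) = 1 by omega, show ((-(0:ℤ)).toNat) = 0 by omega]
    have hr0 := vL_rec k bdig 0
    have hs0 := Ssum_split k bdig 0 (by omega)
    norm_num at hr0 hs0
    have hb0 := hbd 0
    rw [show ((0:ℤ)+1).toNat = 1 by omega]
    omega
  · rw [if_neg (by omega : ¬ (1:ℤ) ≤ m+1), if_neg (by omega : ¬ (1:ℤ) ≤ m-1),
      if_neg (by omega : ¬ (1:ℤ) ≤ m), if_neg (by omega : ¬ m = 0)]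
    set j := (-m).toNat with hj
    have hj1 : 1 ≤ j := by omega
    rw [show ((-(m+1)).toNat) = j - 1 by omega, show ((-(m-1)).toNat) = j + 1 by omega]
    have hr1 := vL_rec k bdig (j-1)
    rw [show j - 1 + 1 = j by omega] at hr1
    have hr2 := vL_rec k bdig j
    have hb := hbd j
    rcases Nat.lt_or_ge j k with hjk | hjk
    · have hs := Ssum_split k bdig j hjk
      omega
    · have hs1 := Ssum_zero k bdig j hjk
      have hs2 := Ssum_zero k bdig (j+1) (by omega)
      omega

lemma lap (n : ℕ) (v : ℤ →₀ ℕ) (hv : ∀ m : ℤ, 0 ≤ Dv n v m ∧ Dv n v m ≤ 2)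
    (τ : ℤ →₀ ℕ) (hτ : Reaches 1 2 (initState n) τ) :
    ∃ w : ℤ →₀ ℕ, (∀ m, w m ≤ v m) ∧ ∀ m, (τ m : ℤ) = Dv n w m := by
  induction hτ with
  | refl =>
      refine ⟨0, fun m => Nat.zero_le _, fun m => ?_⟩
      simp only [initState, Finsupp.single_apply, Dv, Finsupp.coe_zero, Pi.zero_apply]
      rcases eq_or_ne m 0 with h | h
      · subst h; simp
      · rw [if_neg (Ne.symm h), if_neg h]; simp
  | @tail b c hab hstep ih =>
      obtain ⟨w, hw, heq⟩ := ih
      obtain ⟨i, hge, hm1, hi, hp1, hrest⟩ := hstep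
      have hlt : w i < v i := by
        by_contra hcon
        have hwv : w i = v i := le_antisymm (hw i) (le_of_not_gt hcon)
        have h1 : (b i : ℤ) ≤ Dv n v i := by
          rw [heq i]
          unfold Dv
          have h2 := hw (i+1)
          have h3 := hw (i-1)
          rw [hwv]
          push_cast
          omega
        have h4 := (hv i).2
        have h5 : (3 : ℤ) ≤ (b i : ℤ) := by exact_mod_cast hge
        omega
      set w' : ℤ →₀ ℕ := w + Finsupp.single i 1 with hw'
      have key : ∀ x : ℤ, (w' x : ℤ) = (w x : ℤ) + (if i = x then 1 else 0) := by
        intro x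
        rw [hw', Finsupp.add_apply, Finsupp.single_apply]
        by_cases h : i = x <;> simp [h]
      refine ⟨w', fun m => ?_, fun m => ?_⟩
      · have := key m
        by_cases h : i = m
        · subst h
          have : (w' i : ℤ) = w i + 1 := by rw [key i]; simp
          have h2 : w' i = w i + 1 := by exact_mod_cast this
          omega
        · have : (w' m : ℤ) = w m := by rw [key m, if_neg h]; ring
          have h2 : w' m = w m := by exact_mod_cast this
          rw [h2]; exact hw m
      · unfold Dv
        rw [key (m+1), key (m-1), key m]
        have hheq := heq m
        unfold Dv at hheq
        by_cases h1 : m = i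
        · subst h1
          rw [hi]
          rw [if_neg (by omega : ¬ m = m + 1), if_neg (by omega : ¬ m = m - 1),
            if_pos rfl]
          have h5 : (3:ℕ) ≤ b m := hge
          omega
        · by_cases h2 : m = i - 1
          · subst h2
            rw [hm1]
            rw [if_pos (by omega : i = i - 1 + 1), if_neg (by omega : ¬ i = i - 1 - 1),
              if_neg (by omega : ¬ i = i - 1)]
            have hheq' := heq (i-1)
            unfold Dv at hheq'
            push_cast
            omega
          · by_cases h3 : m = i + 1
            · subst h3
              rw [hp1]
              rw [if_neg (by omega : ¬ i = i + 1 + 1), if_pos (by omega : i = i + 1 - 1),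
                if_neg (by omega : ¬ i = i + 1)]
              have hheq' := heq (i+1)
              unfold Dv at hheq'
              push_cast
              omega
            · rw [hrest m h2 h1 h3]
              rw [if_neg (by omega : ¬ i = m + 1), if_neg (by omega : ¬ i = m - 1),
                if_neg (by omega : ¬ i = m)]
              omega

/-! ### Summation identities from the conservation equations -/

section Identities

variable (n N : ℕ) (σ w : ℤ →₀ ℕ)
  (heq : ∀ m, (σ m : ℤ) = Dv n w m)
  (hvan : ∀ m : ℤ, (N:ℤ) ≤ |m| → σ m = 0 ∧ w m = 0)

include heq hvan

lemma hvan' : ∀ x : ℤ, ((N:ℤ) ≤ x ∨ x ≤ -(N:ℤ)) → σ x = 0 ∧ w x = 0 := by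
  intro x hx
  apply hvan
  have h1 := le_abs_self x
  have h2 := neg_abs_le x
  omega

lemma S1 : ∀ m : ℤ, -(N:ℤ) - 1 ≤ m →
    (w (m+1) : ℤ) = 2 * w m + (∑ j ∈ Finset.Icc (-(N:ℤ)) m, (σ j : ℤ))
      - (if 0 ≤ m then (n:ℤ) else 0) := by
  have hV := hvan' n N σ w heq hvan
  intro m hm
  refine Int.le_induction (motive := fun m _ => (w (m+1) : ℤ)
      = 2 * w m + (∑ j ∈ Finset.Icc (-(N:ℤ)) m, (σ j : ℤ))
      - (if 0 ≤ m then (n:ℤ) else 0)) ?_ ?_ m hm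
  ·
      beta_reduce
      have h1 : (w (-(N:ℤ))) = 0 := (hV (-(N:ℤ)) (by omega)).2
      have h2 : (w (-(N:ℤ) - 1)) = 0 := (hV _ (by omega)).2
      rw [show -(N:ℤ) - 1 + 1 = -(N:ℤ) by ring, h1, h2]
      rw [Finset.Icc_eq_empty (by omega)]
      rw [if_neg (by omega)]
      simp
  ·
      intro m hm ih
      have hS := heq (m+1)
      unfold Dv at hS
      have hC : ∑ j ∈ Finset.Icc (-(N:ℤ)) (m+1), (σ j : ℤ)
          = (∑ j ∈ Finset.Icc (-(N:ℤ)) m, (σ j : ℤ)) + σ (m+1) :=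
        zsum_top _ _ (by omega) _
      have hδ : (if 0 ≤ m + 1 then (n:ℤ) else 0)
          = (if 0 ≤ m then (n:ℤ) else 0) + (if m + 1 = 0 then (n:ℤ) else 0) := by
        split_ifs <;> omega
      have hw1 : (w (m+1+1) : ℤ) = (σ (m+1) : ℤ) - (if m+1 = 0 then (n:ℤ) else 0)
          - 2 * w (m+1-1) + 3 * w (m+1) := by omega
      rw [show m+1-1 = m by ring] at hw1
      rw [hw1, hC, hδ, ih]
      ring

lemma S2 : (w 0 : ℤ)
    = ∑ j ∈ Finset.Icc (-(N:ℤ)) (-1), (σ j : ℤ) * (2^((-j).toNat) - 1) := by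
  have hV := hvan' n N σ w heq hvan
  suffices h : ∀ m : ℤ, -(N:ℤ) - 1 ≤ m → m ≤ -1 →
      (w (m+1) : ℤ) = ∑ j ∈ Finset.Icc (-(N:ℤ)) m, (σ j : ℤ) * (2^((m+1-j).toNat) - 1) by
    have h2 := h (-1) (by omega) le_rfl
    rw [show (-1:ℤ) + 1 = 0 by ring] at h2
    rw [h2]
    apply Finset.sum_congr rfl
    intro j hj
    rw [show (0-j : ℤ) = -j by ring]
  intro m hm
  refine Int.le_induction (motive := fun m _ => m ≤ -1 →
      (w (m+1) : ℤ) = ∑ j ∈ Finset.Icc (-(N:ℤ)) m, (σ j : ℤ) * (2^((m+1-j).toNat) - 1)) ?_ ?_ m hm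
  ·
      intro _
      have h1 : (w (-(N:ℤ))) = 0 := (hV (-(N:ℤ)) (by omega)).2
      rw [show -(N:ℤ) - 1 + 1 = -(N:ℤ) by ring, h1]
      rw [Finset.Icc_eq_empty (by omega)]
      simp
  ·
      intro m hm ih
      intro hm1
      have ihm := ih (by omega)
      have hs1 := S1 n N σ w heq hvan (m+1) (by omega)
      rw [if_neg (by omega)] at hs1
      have hC : ∑ j ∈ Finset.Icc (-(N:ℤ)) (m+1), (σ j : ℤ)
          = (∑ j ∈ Finset.Icc (-(N:ℤ)) m, (σ j : ℤ)) + σ (m+1) :=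
        zsum_top _ _ (by omega) _
      have hT : ∑ j ∈ Finset.Icc (-(N:ℤ)) (m+1), (σ j : ℤ) * (2^((m+1+1-j).toNat) - 1)
          = (∑ j ∈ Finset.Icc (-(N:ℤ)) m, (σ j : ℤ) * (2^((m+1+1-j).toNat) - 1))
            + (σ (m+1) : ℤ) * (2^((m+1+1-(m+1)).toNat) - 1) :=
        zsum_top _ _ (by omega) _
      have hone : ((m+1+1-(m+1)):ℤ).toNat = 1 := by omega
      rw [hone] at hT
      rw [hs1, ihm, hC, hT]
      have hmerge : 2 * (∑ j ∈ Finset.Icc (-(N:ℤ)) m, (σ j : ℤ) * (2^((m+1-j).toNat) - 1))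
          + (∑ j ∈ Finset.Icc (-(N:ℤ)) m, (σ j : ℤ))
          = ∑ j ∈ Finset.Icc (-(N:ℤ)) m, (σ j : ℤ) * (2^((m+1+1-j).toNat) - 1) := by
        rw [Finset.mul_sum, ← Finset.sum_add_distrib]
        apply Finset.sum_congr rfl
        intro j hj
        simp only [Finset.mem_Icc] at hj
        rw [show ((m+1+1-j):ℤ).toNat = ((m+1-j):ℤ).toNat + 1 by omega, pow_succ]
        ring
      rw [← hmerge]
      push_cast
      ring

lemma CNn : (∑ j ∈ Finset.Icc (-(N:ℤ)) (N:ℤ), (σ j : ℤ)) = n := by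
  have hV := hvan' n N σ w heq hvan
  have hs1 := S1 n N σ w heq hvan (N:ℤ) (by omega)
  have h1 : (w ((N:ℤ)+1)) = 0 := (hV _ (by omega)).2
  have h2 : (w (N:ℤ)) = 0 := (hV _ (by omega)).2
  rw [h1, h2, if_pos (by omega)] at hs1
  push_cast at hs1
  omega

lemma S3 : (2:ℤ)^(N+1) * w 0
    = ∑ t ∈ Finset.Icc (1:ℤ) (N:ℤ), (σ t : ℤ) * (2^(N+1) - 2^(((N:ℤ)+1-t).toNat)) := by
  have hV := hvan' n N σ w heq hvan
  suffices h : ∀ m : ℤ, m ≤ (N:ℤ) + 1 → 0 ≤ m →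
      (2:ℤ)^(((N:ℤ)+1-m).toNat) * w m
        = ∑ t ∈ Finset.Icc (m+1) (N:ℤ), (σ t : ℤ)
            * (2^(((N:ℤ)+1-m).toNat) - 2^(((N:ℤ)+1-t).toNat)) by
    have h2 := h 0 (by omega) le_rfl
    rw [show (((N:ℤ)+1-0)).toNat = N + 1 by omega] at h2
    rw [show ((0:ℤ)+1) = 1 by ring] at h2
    exact h2
  intro m hm
  refine Int.le_induction_down (motive := fun m _ => 0 ≤ m →
      (2:ℤ)^(((N:ℤ)+1-m).toNat) * w m
        = ∑ t ∈ Finset.Icc (m+1) (N:ℤ), (σ t : ℤ)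
            * (2^(((N:ℤ)+1-m).toNat) - 2^(((N:ℤ)+1-t).toNat))) ?_ ?_ m hm
  ·
      intro _
      have h1 : (w ((N:ℤ)+1)) = 0 := (hV _ (by omega)).2
      rw [h1, Finset.Icc_eq_empty (by omega)]
      simp
  ·
      intro m hm ih
      intro hm0
      rcases eq_or_lt_of_le hm with hNm | hNm
      · subst hNm
        have h1 : (w ((N:ℤ)+1-1)) = 0 := by
          refine (hV _ ?_).2
          omega
        rw [h1, Finset.Icc_eq_empty (by omega)]
        simp
      · have hmN : m ≤ (N:ℤ) := by omega
        have ihm := ih (by omega)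
        have hs1 := S1 n N σ w heq hvan (m-1) (by omega)
        rw [if_pos (by omega), show (m-1+1 : ℤ) = m by ring] at hs1
        have hCN := CNn n N σ w heq hvan
        have hsplit := zsum_split (-(N:ℤ)) (m-1) (N:ℤ) (by omega) (by omega)
          (fun j => (σ j : ℤ))
        rw [show (m-1+1:ℤ) = m by ring] at hsplit
        set R := ∑ t ∈ Finset.Icc m (N:ℤ), (σ t : ℤ) with hR
        have h2w : 2 * (w (m-1) : ℤ) = (w m : ℤ) + R := by omega
        set A := (((N:ℤ)+1-m)).toNat with hA
        have hAe : (((N:ℤ)+1-(m-1))).toNat = A + 1 := by omega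
        rw [hAe, show (m-1+1 : ℤ) = m by ring]
        have hRsplit : R = (σ m : ℤ) + ∑ t ∈ Finset.Icc (m+1) (N:ℤ), (σ t : ℤ) := by
          rw [hR, zsum_split m m (N:ℤ) (by omega) (by omega) (fun j => (σ j : ℤ))]
          simp
        have hTsplit : ∑ t ∈ Finset.Icc m (N:ℤ), (σ t : ℤ)
              * (2^(A+1) - 2^(((N:ℤ)+1-t).toNat))
            = (σ m : ℤ) * (2^(A+1) - 2^A)
              + ∑ t ∈ Finset.Icc (m+1) (N:ℤ), (σ t : ℤ)
                * (2^(A+1) - 2^(((N:ℤ)+1-t).toNat)) := by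
          rw [zsum_split m m (N:ℤ) (by omega) (by omega), Finset.Icc_self,
            Finset.sum_singleton, ← hA]
        rw [hTsplit]
        have hgoal : (2:ℤ)^(A+1) * w (m-1) = 2^A * (2 * w (m-1)) := by ring
        rw [hgoal, h2w, mul_add, ihm, hRsplit]
        have hmerge : ∀ t ∈ Finset.Icc (m+1) (N:ℤ),
            (σ t : ℤ) * (2^A - 2^(((N:ℤ)+1-t).toNat)) + 2^A * (σ t : ℤ)
              = (σ t : ℤ) * (2^(A+1) - 2^(((N:ℤ)+1-t).toNat)) := by
          intro t ht
          rw [pow_succ]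
          ring
        have hco : (∑ t ∈ Finset.Icc (m+1) (N:ℤ), (σ t:ℤ) * (2^A - 2^(((N:ℤ)+1-t).toNat)))
            + (∑ t ∈ Finset.Icc (m+1) (N:ℤ), 2^A * (σ t:ℤ))
            = ∑ t ∈ Finset.Icc (m+1) (N:ℤ), (σ t:ℤ) * (2^(A+1) - 2^(((N:ℤ)+1-t).toNat)) := by
          rw [← Finset.sum_add_distrib]
          exact Finset.sum_congr rfl hmerge
        rw [mul_add, Finset.mul_sum]
        linear_combination hco

end Identities

end Aux19

set_option maxHeartbeats 1000000 in
/-- In the 1-2 game with `n > 3` chips, writing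
`n = 2^k + Σ_{i<k} b_i 2^i` with `b_i ∈ {0,1}`, the final state has `b_i + 1`
chips at vertex `-i` for each `0 ≤ i ≤ k-1`. -/
theorem stmt19 (n : ℕ) (hn : 3 < n) (k : ℕ) (bdig : ℕ → ℕ)
    (hbd : ∀ i : ℕ, bdig i ≤ 1)
    (hrep : n = 2 ^ k + ∑ i ∈ Finset.range k, bdig i * 2 ^ i)
    (σ : ℤ →₀ ℕ) (hσ : IsFinalState 1 2 n σ) :
    ∀ i : ℕ, i < k → σ (-(i : ℤ)) = bdig i + 1 := by
  obtain ⟨hreach, hstab⟩ := hσ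
  have hk2 : 2 ≤ k := by
    by_contra hc
    push_neg at hc
    interval_cases k
    · simp at hrep; omega
    · have := hbd 0
      simp [Finset.sum_range_succ] at hrep
      omega
  have hL : ∑ i ∈ Finset.range k, (bdig i + 1) * 2 ^ i = n - 1 := by
    have h1 : ∑ i ∈ Finset.range k, (bdig i + 1) * 2 ^ i
        = (∑ i ∈ Finset.range k, bdig i * 2 ^ i) + ∑ i ∈ Finset.range k, 2 ^ i := by
      rw [← Finset.sum_add_distrib]
      apply Finset.sum_congr rfl
      intro i _
      ring
    rw [h1, Aux19.geoN]
    have h2 : 1 ≤ 2^k := Nat.one_le_two_pow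
    omega
  have hSC : Aux19.Ssum k bdig 0 = ∑ i ∈ Finset.range k, (bdig i + 1) := by
    unfold Aux19.Ssum
    rw [Finset.range_eq_Ico]
  have hKI : Aux19.vL k bdig 0 + Aux19.Ssum k bdig 0 + 1 = n := by
    have h3 : ∀ t ∈ Finset.Ico 1 k, ((bdig t + 1) * (2^(t-0) - 1)) + (bdig t + 1)
        = (bdig t + 1) * 2^t := by
      intro t ht
      rw [Nat.sub_zero]
      have h5 : 1 ≤ (2:ℕ)^t := Nat.one_le_two_pow
      zify [h5]
      ring
    have h4 : Aux19.vL k bdig 0 + Aux19.Ssum k bdig 1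
        = ∑ t ∈ Finset.Ico 1 k, (bdig t + 1) * 2^t := by
      unfold Aux19.vL Aux19.Ssum
      rw [← Finset.sum_add_distrib]
      exact Finset.sum_congr (by norm_num) h3
    have h6 := Aux19.Ssum_split k bdig 0 (by omega)
    norm_num at h6
    have h7 : ∑ t ∈ Finset.Ico 0 k, (bdig t + 1) * 2^t
        = (bdig 0 + 1) * 2^0 + ∑ t ∈ Finset.Ico 1 k, (bdig t + 1) * 2^t :=
      Finset.sum_eq_sum_Ico_succ_bot (by omega) _
    rw [← Finset.range_eq_Ico, hL] at h7
    simp only [pow_zero, mul_one] at h7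
    omega
  set C0 := Aux19.Ssum k bdig 0 with hC0
  have hvpos : 1 ≤ Aux19.vL k bdig 0 := by
    unfold Aux19.vL
    have hmem : k - 1 ∈ Finset.Ico 1 k := by
      simp only [Finset.mem_Ico]
      omega
    have h6 : 2 ≤ 2^(k-1) := by
      have h6' : 2^1 ≤ 2^(k-1) := Nat.pow_le_pow_right (by norm_num) (by omega)
      simpa using h6'
    have hterm : 1 ≤ (bdig (k-1) + 1) * (2^((k-1) - 0) - 1) := by
      rw [Nat.sub_zero]
      have h8 := Nat.mul_le_mul (show 1 ≤ bdig (k-1) + 1 by omega)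
        (show 1 ≤ 2^(k-1) - 1 by omega)
      simpa using h8
    exact le_trans hterm (Finset.single_le_sum
      (f := fun t => (bdig t + 1) * (2^(t-0) - 1)) (fun i _ => Nat.zero_le _) hmem)
  set q := n - C0 with hqdef
  have hq : q + C0 = n := by omega
  have hq2 : 2 ≤ q := by omega
  have hv := Aux19.hv_main n k q bdig hbd hk2 hKI hq hq2
  obtain ⟨w, hwle, heqw⟩ := Aux19.lap n _ hv σ hreach
  obtain ⟨N, hvanN⟩ : ∃ N : ℕ, ∀ m : ℤ, (N:ℤ) ≤ |m| → σ m = 0 ∧ w m = 0 := by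
    refine ⟨(σ.support ∪ w.support).sup (fun x => x.natAbs) + 1, ?_⟩
    intro m hm
    rw [Int.abs_eq_natAbs] at hm
    constructor
    · by_contra hc
      have h1 : m ∈ σ.support := Finsupp.mem_support_iff.mpr hc
      have h2 := Finset.le_sup (f := fun x : ℤ => x.natAbs)
        (Finset.mem_union_left w.support h1)
      omega
    · by_contra hc
      have h1 : m ∈ w.support := Finsupp.mem_support_iff.mpr hc
      have h2 := Finset.le_sup (f := fun x : ℤ => x.natAbs)
        (Finset.mem_union_right σ.support h1)
      omega
  have hCN := Aux19.CNn n N σ w heqw hvanN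
  have hS2 := Aux19.S2 n N σ w heqw hvanN
  have hS3 := Aux19.S3 n N σ w heqw hvanN
  set Rc := ∑ t ∈ Finset.Icc (1:ℤ) (N:ℤ), (σ t : ℤ) with hRc
  set w0 := (w 0 : ℤ) with hw0
  set Ab := ∑ t ∈ Finset.Icc (1:ℤ) (N:ℤ), (σ t : ℤ) * 2^(((N:ℤ)+1-t).toNat) with hAbdef
  have hsplit3 : ∑ t ∈ Finset.Icc (1:ℤ) (N:ℤ), (σ t : ℤ) * (2^(N+1) - 2^(((N:ℤ)+1-t).toNat))
      = 2^(N+1) * Rc - Ab := by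
    rw [Finset.sum_congr rfl (fun t _ => mul_sub ((σ t : ℤ)) _ _), Finset.sum_sub_distrib,
      hRc, hAbdef, Finset.mul_sum]
    congr 1
    apply Finset.sum_congr rfl
    intro t _
    ring
  have hAb : Ab = 2^(N+1) * (Rc - w0) := by
    rw [hsplit3] at hS3
    linear_combination hS3
  have hAbnn : (0:ℤ) ≤ Ab := Finset.sum_nonneg (fun t _ => by positivity)
  have hgeo := Aux19.geo2 N
  have hAbub : Ab ≤ 2 * (2^(N+1) - 2) := by
    rw [hAbdef]
    calc ∑ t ∈ Finset.Icc (1:ℤ) (N:ℤ), (σ t : ℤ) * 2^(((N:ℤ)+1-t).toNat)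
        ≤ ∑ t ∈ Finset.Icc (1:ℤ) (N:ℤ), 2 * 2^(((N:ℤ)+1-t).toNat) := by
          apply Finset.sum_le_sum
          intro t _
          have h7 : (σ t : ℤ) ≤ 2 := by
            have := hstab t
            omega
          have h8 : (0:ℤ) ≤ 2^(((N:ℤ)+1-t).toNat) := by positivity
          exact mul_le_mul_of_nonneg_right h7 h8
      _ = 2 * (2^(N+1) - 2) := by rw [← Finset.mul_sum, hgeo]
  have hpow1 : (0:ℤ) < 2^(N+1) := by positivity
  have hρ0 : 0 ≤ Rc - w0 := by nlinarith [hAb, hAbnn, hpow1]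
  have hρ1 : Rc - w0 ≤ 1 := by nlinarith [hAb, hAbub, hpow1]
  have hRcw0 : Rc = w0 + 1 := by
    rcases eq_or_lt_of_le hρ0 with hρ | hρ
    swap
    · omega
    exfalso
    have hAb0 : Ab = 0 := by rw [hAb, ← hρ]; ring
    have hσR : ∀ t ∈ Finset.Icc (1:ℤ) (N:ℤ), (σ t : ℤ) = 0 := by
      intro t ht
      have h9 := (Finset.sum_eq_zero_iff_of_nonneg
        (fun t _ => by positivity : ∀ t ∈ Finset.Icc (1:ℤ) (N:ℤ),
          (0:ℤ) ≤ (σ t : ℤ) * 2^(((N:ℤ)+1-t).toNat))).mp hAb0 t ht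
      have h10 : (0:ℤ) < 2^(((N:ℤ)+1-t).toNat) := by positivity
      exact (mul_eq_zero.mp h9).resolve_right (by omega)
    have hRc0 : Rc = 0 := Finset.sum_eq_zero hσR
    have hw00 : w0 = 0 := by omega
    have hnnL : ∀ x ∈ Finset.Icc (-(N:ℤ)) (-1:ℤ),
        (0:ℤ) ≤ (σ x : ℤ) * (2^((-x).toNat) - 1) := by
      intro x hx
      simp only [Finset.mem_Icc] at hx
      have h11 : 1 ≤ (-x).toNat := by omega
      have h12 : (2:ℤ)^1 ≤ 2^((-x).toNat) := pow_le_pow_right₀ (by norm_num) h11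
      have h12' : (2:ℤ) ≤ 2^((-x).toNat) := by simpa using h12
      have h12'' : (0:ℤ) ≤ (σ x : ℤ) := by positivity
      exact mul_nonneg h12'' (by linarith)
    have hzero : ∑ j ∈ Finset.Icc (-(N:ℤ)) (-1:ℤ), (σ j : ℤ) * (2^((-j).toNat) - 1) = 0 := by
      rw [← hS2]
      exact hw00
    have hσL : ∀ j ∈ Finset.Icc (-(N:ℤ)) (-1:ℤ), (σ j : ℤ) = 0 := by
      intro j hj
      have h13 := (Finset.sum_eq_zero_iff_of_nonneg hnnL).mp hzero j hj
      simp only [Finset.mem_Icc] at hj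
      have h11 : 1 ≤ (-j).toNat := by omega
      have h12 : (2:ℤ)^1 ≤ 2^((-j).toNat) := pow_le_pow_right₀ (by norm_num) h11
      have h12' : (2:ℤ) ≤ 2^((-j).toNat) := by simpa using h12
      rcases mul_eq_zero.mp h13 with h | h
      · exact h
      · omega
    have hsp1 := Aux19.zsum_split (-(N:ℤ)) (-1) (N:ℤ) (by omega) (by omega)
      (fun j => (σ j : ℤ))
    have hsp2 := Aux19.zsum_split (0:ℤ) 0 (N:ℤ) (by omega) (by omega)
      (fun j => (σ j : ℤ))
    rw [show (-1:ℤ)+1 = 0 by ring] at hsp1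
    rw [show (0:ℤ)+1 = 1 by ring] at hsp2
    have hz1 : ∑ j ∈ Finset.Icc (-(N:ℤ)) (-1:ℤ), (σ j : ℤ) = 0 := Finset.sum_eq_zero hσL
    have hz2 : ∑ j ∈ Finset.Icc (0:ℤ) (0:ℤ), (σ j : ℤ) = σ 0 := by simp
    have h14 := hstab 0
    rw [hCN] at hsp1
    omega
  have hsplitL := Aux19.zsum_split (-(N:ℤ)) 0 (N:ℤ) (by omega) (by omega)
    (fun j => (σ j : ℤ))
  rw [show (0:ℤ)+1 = 1 by ring] at hsplitL
  set Lc := ∑ j ∈ Finset.Icc (-(N:ℤ)) (0:ℤ), (σ j : ℤ) with hLcdef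
  have hLcRc : Lc + Rc = n := by rw [hCN] at hsplitL; omega
  set Lval := ∑ j ∈ Finset.Icc (-(N:ℤ)) (0:ℤ), (σ j : ℤ) * 2^((-j).toNat) with hLvdef
  have hTop := Aux19.zsum_top (-(N:ℤ)) (-1) (by omega)
    (fun j => (σ j : ℤ) * 2^((-j).toNat))
  have hTopC := Aux19.zsum_top (-(N:ℤ)) (-1) (by omega) (fun j => (σ j : ℤ))
  rw [show (-1:ℤ)+1 = 0 by ring] at hTop hTopC
  have hS2' : w0 = Lval - Lc := by
    rw [hLvdef, hLcdef, hTop, hTopC]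
    simp only [neg_zero, Int.toNat_zero, pow_zero, mul_one]
    rw [hS2]
    rw [Finset.sum_congr rfl (fun j _ => mul_sub ((σ j : ℤ)) _ _), Finset.sum_sub_distrib]
    simp only [mul_one]
    ring
  have hLval : Lval = (n:ℤ) - 1 := by omega
  have hvL0q : Aux19.vL k bdig 0 = q - 1 := by omega
  have hw0le := hwle 0
  have hv0 : Aux19.vstar k bdig q 0 = q - 1 := by
    rw [Aux19.vstar_apply]
    unfold Aux19.fv
    rw [if_neg (by omega)]
    rw [show ((-(0:ℤ)).toNat) = 0 by omega]
    exact hvL0q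
  have hw0z : w0 ≤ (q:ℤ) - 1 := by
    rw [hv0] at hw0le
    omega
  have hLcge : (C0:ℤ) ≤ Lc := by omega
  set dN : ℕ → ℕ := fun i => σ (-(i:ℤ)) with hdN
  have hconv1 : Lval = ∑ i ∈ Finset.range (N+1), (dN i : ℤ) * 2^i := by
    rw [hLvdef]
    apply Finset.sum_nbij' (i := fun (j:ℤ) => (-j).toNat) (j := fun (i:ℕ) => -(i:ℤ))
    · intro a ha
      simp only [Finset.mem_Icc] at ha
      simp only [Finset.mem_range]
      omega
    · intro a ha
      simp only [Finset.mem_range] at ha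
      simp only [Finset.mem_Icc]
      omega
    · intro a ha
      simp only [Finset.mem_Icc] at ha
      omega
    · intro a ha
      simp only [Finset.mem_range] at ha
      omega
    · intro a ha
      simp only [Finset.mem_Icc] at ha
      rw [hdN]
      simp only []
      rw [show ((((-a).toNat):ℤ)) = -a by omega, neg_neg]
  have hconv2 : Lc = ∑ i ∈ Finset.range (N+1), (dN i : ℤ) := by
    rw [hLcdef]
    apply Finset.sum_nbij' (i := fun (j:ℤ) => (-j).toNat) (j := fun (i:ℕ) => -(i:ℤ))
    · intro a ha
      simp only [Finset.mem_Icc] at ha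
      simp only [Finset.mem_range]
      omega
    · intro a ha
      simp only [Finset.mem_range] at ha
      simp only [Finset.mem_Icc]
      omega
    · intro a ha
      simp only [Finset.mem_Icc] at ha
      omega
    · intro a ha
      simp only [Finset.mem_range] at ha
      omega
    · intro a ha
      simp only [Finset.mem_Icc] at ha
      rw [hdN]
      simp only []
      rw [show ((((-a).toNat):ℤ)) = -a by omega, neg_neg]
  have hNat1 : ∑ i ∈ Finset.range (N+1), dN i * 2^i = n - 1 := by
    have hz : ((∑ i ∈ Finset.range (N+1), dN i * 2^i : ℕ) : ℤ) = (n:ℤ) - 1 := by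
      push_cast
      rw [← hconv1]
      exact hLval
    omega
  have hNat2 : ∑ i ∈ Finset.range k, (bdig i + 1) ≤ ∑ i ∈ Finset.range (N+1), dN i := by
    have hz : ((∑ i ∈ Finset.range (N+1), dN i : ℕ) : ℤ) = Lc := by
      push_cast
      rw [hconv2]
    have hz2 : ((∑ i ∈ Finset.range k, (bdig i + 1) : ℕ) : ℤ) = (C0:ℤ) := by
      rw [hSC]
    omega
  have hdle : ∀ i, dN i ≤ 2 := by
    intro i
    have := hstab (-(i:ℤ))
    rw [hdN]
    simp only []
    omega
  have heDig : ∀ i < k, 1 ≤ bdig i + 1 ∧ bdig i + 1 ≤ 2 := fun i _ =>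
    ⟨by omega, by have := hbd i; omega⟩
  have hDM := Aux19.digitMax (n-1) (N+1) k dN (fun i => bdig i + 1) hdle heDig hNat1 hL
  have hsum_eq : ∑ i ∈ Finset.range (N+1), dN i = ∑ i ∈ Finset.range k, (bdig i + 1) :=
    le_antisymm hDM.1 hNat2
  have hpat := hDM.2 hsum_eq
  intro i hik
  have hkN : k ≤ N + 1 := by
    by_contra hc
    push_neg at hc
    have h8 : ∑ i ∈ Finset.range (N+1), dN i * 2^i ≤ 2 * (2^(N+1) - 1) := by
      calc ∑ i ∈ Finset.range (N+1), dN i * 2^i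
          ≤ ∑ i ∈ Finset.range (N+1), 2 * 2^i :=
            Finset.sum_le_sum (fun i _ => Nat.mul_le_mul_right _ (hdle i))
        _ = 2 * (2^(N+1) - 1) := by rw [← Finset.mul_sum, Aux19.geoN]
    have h9 : 2^(N+2) ≤ 2^k := Nat.pow_le_pow_right (by norm_num) (by omega)
    have h10 : 2^k ≤ n := by omega
    have h11 : 1 ≤ 2^(N+1) := Nat.one_le_two_pow
    have h12 : 2^(N+2) = 2 * 2^(N+1) := by ring
    omega
  have hfin := hpat i (lt_of_lt_of_le hik hkN)
  rw [if_pos hik] at hfin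
  rw [hdN] at hfin
  exact hfin
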